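/- For every even integer a ≥ 2, the ℚ-linear map f_a : V_a → V_{a+1} defined on basis vectors by f_a(e_{(r,s)}) = (2/(r+1))·e_{(min(r+1,s), max(r+1,s))} + (2/(s+1))·e_{(r,s+1)} is bijective; in particular, in this case B_a and B_{a+1} both have cardinality a/2. -/

import Mathlib

/-- The index set `B a = {(r,s) : 1 ≤ r ≤ s, r + s = a}`. -/
def B (a : ℕ) : Type := {p : ℕ × ℕ // 1 ≤ p.1 ∧ p.1 ≤ p.2 ∧ p.1 + p.2 = a}

/-- The ℚ-vector space `V a` of finitely supported functions `B a → ℚ`. -/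
abbrev V (a : ℕ) : Type := B a →₀ ℚ

/-- The image of the basis vector `e_{(r,s)}` under `f_a`, namely
`(2/(r+1)) • e_{(min(r+1,s), max(r+1,s))} + (2/(s+1)) • e_{(r, s+1)}`. -/
noncomputable def fAux (a : ℕ) (p : B a) : V (a + 1) :=
  Finsupp.single
    ⟨(min (p.1.1 + 1) p.1.2, max (p.1.1 + 1) p.1.2), by
      obtain ⟨⟨r, s⟩, h1, h2, h3⟩ := p
      dsimp only at *
      omega⟩ ((2 : ℚ) / (p.1.1 + 1))
  + Finsupp.single
    ⟨(p.1.1, p.1.2 + 1), by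
      obtain ⟨⟨r, s⟩, h1, h2, h3⟩ := p
      dsimp only at *
      omega⟩ ((2 : ℚ) / (p.1.2 + 1))

/-- The ℚ-linear map `f_a : V a → V (a+1)` determined on the standard basis by
`f_a(e_{(r,s)}) = (2/(r+1)) • e_{(min(r+1,s), max(r+1,s))} + (2/(s+1)) • e_{(r, s+1)}`. -/
noncomputable def f (a : ℕ) : V a →ₗ[ℚ] V (a + 1) :=
  Finsupp.lsum ℚ fun p => LinearMap.toSpanSingleton ℚ (V (a + 1)) (fAux a p)

instance (a : ℕ) : DecidableEq (B a) := by unfold B; infer_instance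

attribute [reducible] B

/-- `B a` is equivalent to `Fin (a / 2)`. -/
def equivB (a : ℕ) : B a ≃ Fin (a / 2) where
  toFun p := ⟨p.1.1 - 1, by
    obtain ⟨⟨r, s⟩, h1, h2, h3⟩ := p; dsimp only at *; omega⟩
  invFun k := ⟨(k.1 + 1, a - (k.1 + 1)), by
    have := k.2; refine ⟨by omega, by omega, by omega⟩⟩
  left_inv p := by
    obtain ⟨⟨r, s⟩, h1, h2, h3⟩ := p
    apply Subtype.ext
    dsimp only at *
    refine Prod.ext ?_ ?_ <;> dsimp <;> omega
  right_inv k := rfl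

instance (a : ℕ) : Fintype (B a) := Fintype.ofEquiv _ (equivB a).symm

lemma card_B (a : ℕ) : Fintype.card (B a) = a / 2 := by
  rw [Fintype.card_congr (equivB a), Fintype.card_fin]

lemma f_single (a : ℕ) (q : B a) (c : ℚ) :
    f a (Finsupp.single q c) = c • fAux a q := by
  simp [f, Finsupp.lsum_single, LinearMap.toSpanSingleton_apply]

lemma single_mem_range (a : ℕ) (ha : 2 ≤ a) (hev : Even a) (p : B (a + 1)) :
    Finsupp.single p (1 : ℚ) ∈ LinearMap.range (f a) := by
  obtain ⟨m, hm⟩ := hev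
  suffices H : ∀ s' r (h : 1 ≤ (r, s').1 ∧ (r, s').1 ≤ (r, s').2 ∧ (r, s').1 + (r, s').2 = a + 1),
      Finsupp.single (⟨(r, s'), h⟩ : B (a + 1)) (1 : ℚ) ∈ LinearMap.range (f a) by
    obtain ⟨⟨r, s'⟩, h⟩ := p; exact H s' r h
  intro s'
  induction s' using Nat.strong_induction_on with
  | _ s' IH =>
  intro r h
  have h1 : 1 ≤ r := h.1
  have h2 : r ≤ s' := h.2.1
  have h3' : r + s' = a + 1 := h.2.2
  by_cases hr : r = m
  · -- base case : p = (r, r+1) with r = m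
    have hs' : s' = m + 1 := by omega
    subst hr hs'
    refine ⟨Finsupp.single ⟨(r, r), ⟨by omega, by omega, by omega⟩⟩ (((r : ℚ) + 1) / 4), ?_⟩
    rw [f_single]
    have hmin : min (r + 1) r = r := by omega
    have hmax : max (r + 1) r = r + 1 := by omega
    have hrne : ((r : ℚ) + 1) ≠ 0 := by positivity
    rw [fAux]
    dsimp only
    ext ⟨⟨x, y⟩, hx⟩
    simp only [Finsupp.smul_apply, Finsupp.add_apply, Finsupp.single_apply]
    have exy : ∀ (u v : ℕ) (hu : 1 ≤ (u, v).1 ∧ (u, v).1 ≤ (u, v).2 ∧ (u, v).1 + (u, v).2 = a + 1),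
        ((⟨(u, v), hu⟩ : B (a + 1)) = ⟨⟨x, y⟩, hx⟩) ↔ (u = x ∧ v = y) := by
      intro u v hu
      constructor
      · intro hh
        have := congrArg Subtype.val hh
        exact ⟨congrArg Prod.fst this, congrArg Prod.snd this⟩
      · rintro ⟨rfl, rfl⟩; rfl
    simp only [exy]
    by_cases hcase : r = x ∧ r + 1 = y
    · have hc1 : (min (r + 1) r = x ∧ max (r + 1) r = y) := by omega
      rw [if_pos hc1, if_pos hcase, if_pos hcase]
      simp only [smul_eq_mul]
      field_simp
      ring
    · have hc1 : ¬ (min (r + 1) r = x ∧ max (r + 1) r = y) := by omega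
      rw [if_neg hc1, if_neg hcase, if_neg hcase]
      simp
  · -- inductive step : r < m
    have hrm : r < m := by omega
    set s : ℕ := a - r with hs
    have hs1 : s' = s + 1 := by omega
    have hmin : min (r + 1) s = r + 1 := by omega
    have hmax : max (r + 1) s = s := by omega
    have hIH : Finsupp.single (⟨(r + 1, s), ⟨by omega, by omega, by omega⟩⟩ : B (a + 1)) (1 : ℚ) ∈
        LinearMap.range (f a) :=
      IH s (by omega) (r + 1) ⟨by omega, by omega, by omega⟩
    have hfq : fAux a (⟨(r, s), ⟨by omega, by omega, by omega⟩⟩ : B a) ∈ LinearMap.range (f a) := by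
      refine ⟨Finsupp.single ⟨(r, s), ⟨by omega, by omega, by omega⟩⟩ 1, ?_⟩
      rw [f_single, one_smul]
    have key : Finsupp.single (⟨(r, s'), h⟩ : B (a + 1)) (1 : ℚ) =
        (((s : ℚ) + 1) / 2) • fAux a (⟨(r, s), ⟨by omega, by omega, by omega⟩⟩ : B a)
        - ((((s : ℚ) + 1) / 2) * (2 / (r + 1))) •
            (Finsupp.single (⟨(r + 1, s), ⟨by omega, by omega, by omega⟩⟩ : B (a + 1)) (1 : ℚ) : V (a + 1)) := by
      rw [fAux]
      dsimp only
      ext ⟨⟨x, y⟩, hx⟩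
      have hsne : ((s : ℚ) + 1) ≠ 0 := by positivity
      have hrne : ((r : ℚ) + 1) ≠ 0 := by positivity
      simp only [Finsupp.smul_apply, Finsupp.sub_apply, Finsupp.add_apply,
        Finsupp.single_apply]
      have exy : ∀ (u v : ℕ) (hu : 1 ≤ (u, v).1 ∧ (u, v).1 ≤ (u, v).2 ∧ (u, v).1 + (u, v).2 = a + 1),
          ((⟨(u, v), hu⟩ : B (a + 1)) = ⟨⟨x, y⟩, hx⟩) ↔ (u = x ∧ v = y) := by
        intro u v hu
        constructor
        · intro hh
          have := congrArg Subtype.val hh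
          exact ⟨congrArg Prod.fst this, congrArg Prod.snd this⟩
        · rintro ⟨rfl, rfl⟩; rfl
      simp only [exy]
      by_cases hx1 : r = x ∧ s' = y
      · rw [if_pos hx1]
        have hc2 : ¬ (min (r + 1) s = x ∧ max (r + 1) s = y) := by omega
        have hc3 : (r = x ∧ s + 1 = y) := by omega
        have hc4 : ¬ (r + 1 = x ∧ s = y) := by omega
        rw [if_neg hc2, if_pos hc3, if_neg hc4]
        simp only [smul_eq_mul]
        field_simp
        ring
      · rw [if_neg hx1]
        by_cases hx2 : min (r + 1) s = x ∧ max (r + 1) s = y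
        · have hc3 : ¬ (r = x ∧ s + 1 = y) := by omega
          have hc4 : (r + 1 = x ∧ s = y) := by omega
          rw [if_pos hx2, if_neg hc3, if_pos hc4]
          simp only [smul_eq_mul]
          field_simp
          ring
        · have hc3 : ¬ (r = x ∧ s + 1 = y) := by omega
          have hc4 : ¬ (r + 1 = x ∧ s = y) := by omega
          rw [if_neg hx2, if_neg hc3, if_neg hc4]
          simp
    rw [key]
    exact sub_mem (Submodule.smul_mem _ _ hfq) (Submodule.smul_mem _ _ hIH)

theorem f_bijective_of_even (a : ℕ) (ha : 2 ≤ a) (hev : Even a) :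
    Function.Bijective (f a) ∧
      Nat.card (B a) = a / 2 ∧ Nat.card (B (a + 1)) = a / 2 := by
  obtain ⟨m, hm⟩ := hev
  have hcard : Nat.card (B a) = a / 2 := by
    rw [Nat.card_eq_fintype_card, card_B]
  have hcard' : Nat.card (B (a + 1)) = a / 2 := by
    rw [Nat.card_eq_fintype_card, card_B]; omega
  have hsurj : Function.Surjective (f a) := by
    rw [← LinearMap.range_eq_top, ← top_le_iff, ← Finsupp.basisSingleOne.span_eq,
      Submodule.span_le]
    rintro x ⟨p, rfl⟩
    simpa [Finsupp.coe_basisSingleOne] using single_mem_range a ha ⟨m, hm⟩ p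
  have hdim : Module.finrank ℚ (V a) = Module.finrank ℚ (V (a + 1)) := by
    rw [Module.finrank_finsupp_self, Module.finrank_finsupp_self, card_B, card_B]
    omega
  have hinj : Function.Injective (f a) :=
    (LinearMap.injective_iff_surjective_of_finrank_eq_finrank hdim).mpr hsurj
  exact ⟨⟨hinj, hsurj⟩, hcard, hcard'⟩
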